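/- For every rooted unlabeled tree t on n vertices, m(t) n(t) / ∏_{i=2}^n C(i,2) = n · 2^{n-1} / (|SG(t)| · ∏_{v ∈ t} h(v)²), where h(v) is the number of vertices of the subtree rooted at v and SG(t) is the symmetry group of t. -/

import Mathlib

/-!
Common definitions: rooted unlabeled trees on `n` vertices, the growth/pruning
coefficients `n(t,t')` and `m(t,t')`, the measure `π_n`, the up/down transition
probabilities, the down-up and up-down Markov chains, and separation distance.

A rooted tree is represented as `PreTree.node cs` where `cs` is the list of
subtrees of the root's children.  An *unlabeled* rooted tree is represented by
its canonical representative (children recursively sorted by an injective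
encoding into `ℕ`), and `trees n` is the finite set of canonical rooted trees
on `n` vertices.
-/

namespace RootedTreeChain

inductive PreTree : Type where
  | node : List PreTree → PreTree

namespace PreTree

/- Number of vertices. -/
mutual
  def size : PreTree → ℕ
    | .node cs => 1 + sizeList cs
  def sizeList : List PreTree → ℕ
    | [] => 0
    | t :: ts => size t + sizeList ts
end

mutual
def deq : (a b : PreTree) → Decidable (a = b)
  | .node cs, .node ds =>
    match deqList cs ds with
    | isTrue h => isTrue (by rw [h])
    | isFalse h => isFalse (by intro hh; cases hh; exact h rfl)
def deqList : (as bs : List PreTree) → Decidable (as = bs)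
  | [], [] => isTrue rfl
  | [], _ :: _ => isFalse (by simp)
  | _ :: _, [] => isFalse (by simp)
  | a :: as, b :: bs =>
    match deq a b, deqList as bs with
    | isTrue h1, isTrue h2 => isTrue (by rw [h1, h2])
    | isFalse h1, _ => isFalse (by intro hh; injection hh; contradiction)
    | _, isFalse h2 => isFalse (by intro hh; injection hh; contradiction)
end

instance : DecidableEq PreTree := deq

/- An injective encoding of trees into `ℕ`, used only to sort children
so that each unlabeled rooted tree has a unique canonical representative. -/
mutual
  def enc : PreTree → ℕ
    | .node cs => encList cs
  def encList : List PreTree → ℕ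
    | [] => 0
    | t :: ts => Nat.pair (enc t) (encList ts) + 1
end

/- Canonical representative of the isomorphism class of a rooted tree:
recursively sort the children by their encoding. -/
mutual
  def canon : PreTree → PreTree
    | .node cs => .node ((canonList cs).mergeSort (fun a b => enc a ≤ enc b))
  def canonList : List PreTree → List PreTree
    | [] => []
    | t :: ts => canon t :: canonList ts
end

/-- The one-vertex rooted tree `•`. -/
def leaf : PreTree := .node []

/- The addresses (paths of child indices from the root) of all vertices. -/
mutual
  def positions : PreTree → List (List ℕ)
    | .node cs => [] :: positionsList 0 cs
  def positionsList : ℕ → List PreTree → List (List ℕ)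
    | _, [] => []
    | i, t :: ts => (positions t).map (fun p => i :: p) ++ positionsList (i + 1) ts
end

/- The addresses of all terminal vertices (vertices with no outgoing edge). -/
mutual
  def termPositions : PreTree → List (List ℕ)
    | .node [] => [[]]
    | .node (c :: cs) => termPositionsList 0 (c :: cs)
  def termPositionsList : ℕ → List PreTree → List (List ℕ)
    | _, [] => []
    | i, t :: ts => (termPositions t).map (fun p => i :: p) ++ termPositionsList (i + 1) ts
end

/- Attach a new terminal vertex by an edge to the vertex at address `p`. -/
mutual
  def addLeafAt : PreTree → List ℕ → PreTree
    | .node cs, [] => .node (cs ++ [leaf])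
    | .node cs, i :: p => .node (addLeafAtList cs i p)
  def addLeafAtList : List PreTree → ℕ → List ℕ → List PreTree
    | [], _, _ => []
    | t :: ts, 0, p => addLeafAt t p :: ts
    | t :: ts, i + 1, p => t :: addLeafAtList ts i p
end

/- Remove the (terminal) vertex at address `p` together with the edge into it. -/
mutual
  def removeAt : PreTree → List ℕ → PreTree
    | .node cs, [] => .node cs
    | .node cs, [i] => .node (cs.eraseIdx i)
    | .node cs, i :: p => .node (removeAtList cs i p)
  def removeAtList : List PreTree → ℕ → List ℕ → List PreTree
    | [], _, _ => []
    | t :: ts, 0, p => removeAt t p :: ts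
    | t :: ts, i + 1, p => t :: removeAtList ts i p
end

/-- For `s ↗ t` (and more generally any `s, t` with `size t = size s + 1`),
`ncoef s t` is `n(s,t)`: the number of vertices of `s` to which a new edge can
be added to obtain `t`. -/
def ncoef (s t : PreTree) : ℕ :=
  ((positions s).filter (fun p => canon (addLeafAt s p) = t)).length

/-- For `s ↗ t`, `mcoef s t` is `m(s,t)`: the number of edges of `t` (into a
terminal vertex) which when removed give `s`. -/
def mcoef (s t : PreTree) : ℕ :=
  ((termPositions t).filter (fun p => canon (removeAt t p) = s)).length

/-- The list of all (canonical representatives of) rooted unlabeled trees on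
`n` vertices: every tree on `n+1 ≥ 2` vertices is obtained by attaching a new
terminal vertex to a tree on `n` vertices. -/
def treeList : ℕ → List PreTree
  | 0 => []
  | 1 => [leaf]
  | n + 2 =>
      ((treeList (n + 1)).flatMap
        (fun t => (positions t).map (fun p => canon (addLeafAt t p)))).dedup

/-- The set `𝒯_n` of rooted unlabeled trees on `n` vertices. -/
def trees (n : ℕ) : Finset PreTree := (treeList n).toFinset

/-- `T_n = |𝒯_n|`, the number of rooted unlabeled trees on `n` vertices. -/
def T (n : ℕ) : ℕ := (trees n).card

/-- Generalized growth coefficients: `nGen k t t'` is the coefficient `n(t,t')`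
of `t'` in `G^k(t)` (for `size t' = size t + k`). -/
def nGen : ℕ → PreTree → PreTree → ℕ
  | 0, t, t' => if t = t' then 1 else 0
  | k + 1, t, t' => ((treeList (t.size + k)).map (fun s => nGen k t s * ncoef s t')).sum

/-- Generalized pruning coefficients: `mGen k t t'` is the coefficient `m(t,t')`
of `t` in `P^k(t')` (for `size t' = size t + k`). -/
def mGen : ℕ → PreTree → PreTree → ℕ
  | 0, t, t' => if t = t' then 1 else 0
  | k + 1, t, t' => ((treeList (t'.size - 1)).map (fun s => mcoef s t' * mGen k t s)).sum

/-- `m(t) = m(•,t)`, the number of ways to take `t` apart by sequentially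
removing terminal edges. -/
def mWt (t : PreTree) : ℕ := mGen (t.size - 1) leaf t

/-- `n(t) = n(•,t)`, the number of ways to build `t` up from `•`. -/
def nWt (t : PreTree) : ℕ := nGen (t.size - 1) leaf t

/-- The measure `π_n(t) = m(t) n(t) / ∏_{i=2}^n C(i,2)` on `𝒯_n`. -/
def piM (n : ℕ) (t : PreTree) : ℚ :=
  (mWt t * nWt t : ℚ) / ∏ i ∈ Finset.Icc 2 n, (Nat.choose i 2 : ℚ)

/-- Upward transition probability `P_u(s,t) = m(s,t) n(t) / (C(n,2) n(s))`
from `s ∈ 𝒯_{n-1}` to `t ∈ 𝒯_n`. -/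
def Pu (n : ℕ) (s t : PreTree) : ℚ :=
  (mcoef s t : ℚ) * (nWt t : ℚ) / ((Nat.choose n 2 : ℚ) * (nWt s : ℚ))

/-- Downward transition probability `P_d(t,s) = m(s,t) m(s) / m(t)`
from `t ∈ 𝒯_n` to `s ∈ 𝒯_{n-1}`. -/
def Pd (t s : PreTree) : ℚ :=
  (mcoef s t : ℚ) * (mWt s : ℚ) / (mWt t : ℚ)

/-- The down-up Markov chain on `𝒯_n`:
`K(t,t') = Σ_{s : s ↗ t, s ↗ t'} P_d(t,s) P_u(s,t')`.  (The sum may be taken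
over all `s ∈ 𝒯_{n-1}` since the summand vanishes unless `s ↗ t` and `s ↗ t'`.) -/
def K (n : ℕ) (t t' : PreTree) : ℚ :=
  ∑ s ∈ trees (n - 1), Pd t s * Pu n s t'

/-- `r`-step transition probabilities `K^r(t,t')` of the down-up chain. -/
def Kpow (n : ℕ) : ℕ → PreTree → PreTree → ℚ
  | 0, t, t' => if t = t' then 1 else 0
  | r + 1, t, t' => ∑ s ∈ trees n, K n t s * Kpow n r s t'

/-- The up-down Markov chain on `𝒯_n`:
`DU_n(t,t') = Σ_{s : s ⋗ t, s ⋗ t'} P_u(t,s) P_d(s,t')`. -/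
def DU (n : ℕ) (t t' : PreTree) : ℚ :=
  ∑ s ∈ trees (n + 1), Pu (n + 1) t s * Pd s t'

/-- `r`-step transition probabilities of the up-down chain. -/
def DUpow (n : ℕ) : ℕ → PreTree → PreTree → ℚ
  | 0, t, t' => if t = t' then 1 else 0
  | r + 1, t, t' => ∑ s ∈ trees n, DU n t s * DUpow n r s t'

/-- Maximal separation distance `s^*(r) = max_{t,t' ∈ 𝒯_n} [1 - K^r(t,t')/π_n(t')]`
of the down-up chain on `𝒯_n`. -/
noncomputable def sStar (n r : ℕ) : ℝ :=
  sSup {x : ℝ | ∃ t ∈ trees n, ∃ t' ∈ trees n,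
    x = 1 - (Kpow n r t t' : ℝ) / (piM n t' : ℝ)}

/-- Maximal separation distance of the up-down chain on `𝒯_n`. -/
noncomputable def sStarDU (n r : ℕ) : ℝ :=
  sSup {x : ℝ | ∃ t ∈ trees n, ∃ t' ∈ trees n,
    x = 1 - (DUpow n r t t' : ℝ) / (piM n t' : ℝ)}

/-- The path on `n` vertices (rooted at an end): the unique rooted tree on
`n ≥ 2` vertices with exactly one terminal vertex. -/
def pathTree : ℕ → PreTree
  | 0 => leaf
  | 1 => leaf
  | n + 2 => .node [pathTree (n + 1)]

/-- The star on `n` vertices (rooted at the center): the unique rooted tree on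
`n` vertices with `n-1` terminal vertices. -/
def starTree (n : ℕ) : PreTree := .node (List.replicate (n - 1) leaf)


/- The order of the symmetry group `SG(t) = ∏_{v ∈ t} SG(t,v)`, where for a
vertex `v` with children `v_1, …, v_k`, `SG(t,v)` is generated by the
permutations exchanging isomorphic subtrees rooted at the `v_i`. -/
mutual
  def sgOrder : PreTree → ℕ
    | .node cs => sgOrderList cs *
        ((canonList cs).dedup.map (fun c => Nat.factorial ((canonList cs).count c))).prod
  def sgOrderList : List PreTree → ℕ
    | [] => 1
    | t :: ts => sgOrder t * sgOrderList ts
end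

/- `hProd t = ∏_{v ∈ t} h(v)`, the product over all vertices `v` of `t` of the
number `h(v)` of vertices of the subtree rooted at `v`. -/
mutual
  def hProd : PreTree → ℕ
    | .node cs => size (.node cs) * hProdList cs
  def hProdList : List PreTree → ℕ
    | [] => 1
    | t :: ts => hProd t * hProdList ts
end

/-- The matrix entry of `G P : ℂ𝒯_n → ℂ𝒯_n`: the coefficient of `t'` in `G(P(t))`. -/
def gpEntry (n : ℕ) (t t' : PreTree) : ℕ :=
  ∑ s ∈ trees (n - 1), mcoef s t * ncoef s t'

/-- The matrix entry of `(G P)^l : ℂ𝒯_n → ℂ𝒯_n`: the coefficient of `t'` in `(GP)^l(t)`. -/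
def gpPow (n : ℕ) : ℕ → PreTree → PreTree → ℕ
  | 0, t, t' => if t = t' then 1 else 0
  | l + 1, t, t' => ∑ u ∈ trees n, gpPow n l t u * gpEntry n u t'

section Aux

theorem inductionOn {P : PreTree → Prop} (t : PreTree)
    (h : ∀ cs, (∀ c ∈ cs, P c) → P (node cs)) : P t :=
  match t with
  | node cs => h cs (fun c hc => inductionOn c h)
decreasing_by
  have := List.sizeOf_lt_of_mem hc
  simp only [PreTree.node.sizeOf_spec]
  omega

@[simp] theorem size_node (cs : List PreTree) : size (node cs) = 1 + sizeList cs := by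
  rw [size]

@[simp] theorem sizeList_nil : sizeList [] = 0 := by rw [sizeList]
@[simp] theorem sizeList_cons (t : PreTree) (ts : List PreTree) :
    sizeList (t :: ts) = size t + sizeList ts := by rw [sizeList]

theorem sizeList_eq_sum (cs : List PreTree) : sizeList cs = (cs.map size).sum := by
  induction cs with
  | nil => simp
  | cons c cs ih => simp [ih]

theorem size_pos (t : PreTree) : 0 < size t := by
  cases t with | node cs => simp

end Aux
section Canon

@[simp] theorem enc_node (cs : List PreTree) : enc (node cs) = encList cs := by rw [enc]
@[simp] theorem encList_nil : encList [] = 0 := by rw [encList]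
@[simp] theorem encList_cons (t : PreTree) (ts : List PreTree) :
    encList (t :: ts) = Nat.pair (enc t) (encList ts) + 1 := by rw [encList]

theorem encList_inj_aux : ∀ cs : List PreTree,
    (∀ c ∈ cs, ∀ u, enc c = enc u → c = u) →
    ∀ ds : List PreTree, encList cs = encList ds → cs = ds := by
  intro cs
  induction cs with
  | nil => intro _ ds h; cases ds with
    | nil => rfl
    | cons d ds => simp at h
  | cons c cs ih =>
    intro hmem ds h
    cases ds with
    | nil => simp at h
    | cons d ds =>
      simp only [encList_cons, add_left_inj] at h
      have h1 := (Nat.pair_eq_pair.mp h).1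
      have h2 := (Nat.pair_eq_pair.mp h).2
      have hc : c = d := hmem c (by simp) d h1
      have hcs : cs = ds := ih (fun x hx => hmem x (by simp [hx])) ds h2
      rw [hc, hcs]

theorem enc_inj : ∀ t : PreTree, ∀ u, enc t = enc u → t = u := by
  intro t
  induction t using inductionOn with
  | h cs ih =>
    intro u h
    cases u with
    | node ds =>
      have : cs = ds := encList_inj_aux cs ih ds (by simpa using h)
      rw [this]

/-- The comparison used by `canon`. -/
def encLe (a b : PreTree) : Bool := enc a ≤ enc b

@[simp] theorem canonList_nil : canonList [] = [] := by rw [canonList]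
@[simp] theorem canonList_cons (t : PreTree) (ts : List PreTree) :
    canonList (t :: ts) = canon t :: canonList ts := by rw [canonList]

theorem canon_node (cs : List PreTree) :
    canon (node cs) = node ((canonList cs).mergeSort encLe) := by rw [canon]; rfl

theorem canonList_eq_map (cs : List PreTree) : canonList cs = cs.map canon := by
  induction cs with
  | nil => simp
  | cons c cs ih => simp [ih]

theorem encLe_trans : ∀ a b c : PreTree, encLe a b → encLe b c → encLe a c := by
  intro a b c hab hbc
  simp only [encLe, decide_eq_true_eq] at *
  omega

theorem encLe_total : ∀ a b : PreTree, encLe a b || encLe b a := by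
  intro a b
  simp only [encLe]
  by_cases h : enc a ≤ enc b <;> simp [h] <;> omega

theorem pairwise_mergeSort (l : List PreTree) :
    (l.mergeSort encLe).Pairwise (fun a b => encLe a b) := by
  simpa using List.pairwise_mergeSort encLe_trans encLe_total l

theorem eq_of_perm_of_pairwise {l₁ l₂ : List PreTree} (hp : l₁.Perm l₂)
    (h1 : l₁.Pairwise (fun a b => encLe a b)) (h2 : l₂.Pairwise (fun a b => encLe a b)) :
    l₁ = l₂ := by
  haveI : IsAntisymm PreTree (fun a b => encLe a b = true) := by
    constructor
    intro a b hab hba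
    simp only [encLe, decide_eq_true_eq] at hab hba
    exact enc_inj a b (le_antisymm hab hba)
  exact List.Perm.eq_of_pairwise (le := fun a b => encLe a b = true)
    (fun a b _ _ hab hba => antisymm (r := fun a b => encLe a b = true) hab hba) h1 h2 hp

theorem canon_node_eq_iff_ms (cs ds : List PreTree) :
    canon (node cs) = canon (node ds) ↔
      ((canonList cs : Multiset PreTree) = (canonList ds : Multiset PreTree)) := by
  rw [canon_node, canon_node, Multiset.coe_eq_coe]
  constructor
  · intro h
    have h' : (canonList cs).mergeSort encLe = (canonList ds).mergeSort encLe := by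
      injection h
    have p1 : (canonList cs).Perm ((canonList cs).mergeSort encLe) :=
      (List.mergeSort_perm _ _).symm
    refine p1.trans ?_
    rw [h']
    exact List.mergeSort_perm _ _
  · intro h
    have : (canonList cs).mergeSort encLe = (canonList ds).mergeSort encLe :=
      eq_of_perm_of_pairwise
        (((List.mergeSort_perm _ _).trans h).trans (List.mergeSort_perm _ _).symm)
        (pairwise_mergeSort _) (pairwise_mergeSort _)
    rw [this]

theorem canon_canon : ∀ t : PreTree, canon (canon t) = canon t := by
  intro t
  induction t using inductionOn with
  | h cs ih =>
    rw [canon_node]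
    rw [canon_node]
    congr 1
    have hmem : ∀ c ∈ (canonList cs).mergeSort encLe, canon c = c := by
      intro c hc
      rw [List.mem_mergeSort, canonList_eq_map, List.mem_map] at hc
      obtain ⟨a, ha, rfl⟩ := hc
      exact ih a ha
    have : canonList ((canonList cs).mergeSort encLe) = (canonList cs).mergeSort encLe := by
      rw [canonList_eq_map]
      calc List.map canon ((canonList cs).mergeSort encLe)
          = List.map id ((canonList cs).mergeSort encLe) := List.map_congr_left hmem
        _ = _ := List.map_id _
    rw [this, List.mergeSort_of_pairwise (pairwise_mergeSort _)]

/-- A tree is canonical if it is its own canonical representative. -/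
def IsCanon (t : PreTree) : Prop := canon t = t

theorem isCanon_canon (t : PreTree) : IsCanon (canon t) := canon_canon t

theorem canonList_eq_self {cs : List PreTree} (h : ∀ c ∈ cs, IsCanon c) :
    canonList cs = cs := by
  rw [canonList_eq_map]
  calc List.map canon cs = List.map id cs := List.map_congr_left h
    _ = cs := List.map_id _

theorem isCanon_leaf : IsCanon leaf := by
  rw [IsCanon, leaf, canon_node]
  simp

theorem IsCanon.children {cs : List PreTree} (h : IsCanon (node cs)) :
    ∀ c ∈ cs, IsCanon c := by
  rw [IsCanon, canon_node] at h
  have h' : (canonList cs).mergeSort encLe = cs := by injection h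
  intro c hc
  rw [← h', List.mem_mergeSort, canonList_eq_map, List.mem_map] at hc
  obtain ⟨a, _, rfl⟩ := hc
  exact canon_canon a

/-- Key: testing `canon (node cs) = node ts` for canonical `node ts` is a
multiset comparison. -/
theorem canon_node_eq_canonical {cs ts : List PreTree} (ht : IsCanon (node ts)) :
    canon (node cs) = node ts ↔
      ((canonList cs : Multiset PreTree) = (ts : Multiset PreTree)) := by
  have hts : canonList ts = ts := canonList_eq_self ht.children
  constructor
  · intro h
    have : canon (node cs) = canon (node ts) := by rw [h, ht]
    rw [canon_node_eq_iff_ms] at this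
    rwa [hts] at this
  · intro h
    have : canon (node cs) = canon (node ts) := by
      rw [canon_node_eq_iff_ms, hts]; exact h
    rwa [ht] at this

end Canon
section Weights

@[simp] theorem hProd_node (cs : List PreTree) :
    hProd (node cs) = size (node cs) * hProdList cs := by rw [hProd]
@[simp] theorem hProdList_nil : hProdList [] = 1 := by rw [hProdList]
@[simp] theorem hProdList_cons (t : PreTree) (ts : List PreTree) :
    hProdList (t :: ts) = hProd t * hProdList ts := by rw [hProdList]

theorem hProdList_eq_prod (cs : List PreTree) : hProdList cs = (cs.map hProd).prod := by
  induction cs with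
  | nil => simp
  | cons c cs ih => simp [ih]

@[simp] theorem sgOrderList_nil : sgOrderList [] = 1 := by rw [sgOrderList]
@[simp] theorem sgOrderList_cons (t : PreTree) (ts : List PreTree) :
    sgOrderList (t :: ts) = sgOrder t * sgOrderList ts := by rw [sgOrderList]

theorem sgOrder_node (cs : List PreTree) :
    sgOrder (node cs) = sgOrderList cs *
      ((canonList cs).dedup.map (fun c => Nat.factorial ((canonList cs).count c))).prod := by
  rw [sgOrder]

theorem sgOrderList_eq_prod (cs : List PreTree) : sgOrderList cs = (cs.map sgOrder).prod := by
  induction cs with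
  | nil => simp
  | cons c cs ih => simp [ih]

theorem size_canon : ∀ t : PreTree, size (canon t) = size t := by
  intro t
  induction t using inductionOn with
  | h cs ih =>
    rw [canon_node, size_node, size_node]
    congr 1
    rw [sizeList_eq_sum, sizeList_eq_sum]
    have hperm : ((canonList cs).mergeSort encLe).Perm (canonList cs) :=
      List.mergeSort_perm _ _
    rw [(hperm.map size).sum_eq, canonList_eq_map, List.map_map]
    congr 1
    exact List.map_congr_left (fun c hc => ih c hc)

theorem hProd_canon : ∀ t : PreTree, hProd (canon t) = hProd t := by
  intro t
  induction t using inductionOn with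
  | h cs ih =>
    rw [canon_node, hProd_node, hProd_node, ← canon_node, size_canon]
    congr 1
    rw [hProdList_eq_prod, hProdList_eq_prod]
    have hperm : ((canonList cs).mergeSort encLe).Perm (canonList cs) :=
      List.mergeSort_perm _ _
    rw [(hperm.map hProd).prod_eq, canonList_eq_map, List.map_map]
    congr 1
    exact List.map_congr_left (fun c hc => ih c hc)

theorem hProd_pos : ∀ t : PreTree, 0 < hProd t := by
  intro t
  induction t using inductionOn with
  | h cs ih =>
    rw [hProd_node]
    apply Nat.mul_pos (size_pos _)
    rw [hProdList_eq_prod]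
    apply List.prod_pos
    intro x hx
    rw [List.mem_map] at hx
    obtain ⟨c, hc, rfl⟩ := hx
    exact ih c hc

theorem sgOrder_pos : ∀ t : PreTree, 0 < sgOrder t := by
  intro t
  induction t using inductionOn with
  | h cs ih =>
    rw [sgOrder_node]
    apply Nat.mul_pos
    · rw [sgOrderList_eq_prod]
      apply List.prod_pos
      intro x hx
      rw [List.mem_map] at hx
      obtain ⟨c, hc, rfl⟩ := hx
      exact ih c hc
    · apply List.prod_pos
      intro x hx
      rw [List.mem_map] at hx
      obtain ⟨c, _, rfl⟩ := hx
      exact Nat.factorial_pos _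

theorem size_le_sizeList {c : PreTree} {cs : List PreTree} (h : c ∈ cs) :
    size c ≤ sizeList cs := by
  rw [sizeList_eq_sum]
  exact List.single_le_sum (fun x _ => Nat.zero_le x) _ (List.mem_map_of_mem (f := size) h)

/-- The symmetry-group order as a function of the children multiset. -/
def msSG (m : Multiset PreTree) : ℕ :=
  (m.map sgOrder).prod * ∏ x ∈ m.toFinset, (m.count x).factorial

theorem msSG_cons (x : PreTree) (m : Multiset PreTree) :
    msSG (x ::ₘ m) = sgOrder x * (m.count x + 1) * msSG m := by
  unfold msSG
  rw [Multiset.map_cons, Multiset.prod_cons, Multiset.toFinset_cons]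
  have hcount : ∀ y, (x ::ₘ m).count y = m.count y + if y = x then 1 else 0 := by
    intro y
    rw [Multiset.count_cons]
  by_cases hx : x ∈ m.toFinset
  · rw [Finset.insert_eq_self.mpr hx]
    rw [← Finset.mul_prod_erase _ _ hx, ← Finset.mul_prod_erase _ (fun y => (m.count y).factorial) hx]
    have h1 : ((x ::ₘ m).count x).factorial = (m.count x + 1) * (m.count x).factorial := by
      rw [hcount x, if_pos rfl, Nat.factorial_succ]
    have h2 : ∀ y ∈ m.toFinset.erase x, ((x ::ₘ m).count y).factorial = (m.count y).factorial := by
      intro y hy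
      rw [hcount y, if_neg (Finset.ne_of_mem_erase hy), Nat.add_zero]
    rw [h1, Finset.prod_congr rfl h2]
    ring
  · rw [Finset.prod_insert hx]
    have h0 : m.count x = 0 := by
      rw [Multiset.mem_toFinset] at hx
      exact Multiset.count_eq_zero.mpr hx
    have h1 : ((x ::ₘ m).count x).factorial = 1 := by
      rw [hcount x, if_pos rfl, h0]
      rfl
    have h2 : ∀ y ∈ m.toFinset, ((x ::ₘ m).count y).factorial = (m.count y).factorial := by
      intro y hy
      have : y ≠ x := by rintro rfl; exact hx hy
      rw [hcount y, if_neg this, Nat.add_zero]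
    rw [h1, Finset.prod_congr rfl h2, h0]
    ring

theorem sgOrder_eq_msSG {cs : List PreTree} (h : ∀ c ∈ cs, IsCanon c) :
    sgOrder (node cs) = msSG (cs : Multiset PreTree) := by
  rw [sgOrder_node, canonList_eq_self h]
  unfold msSG
  congr 1
  · rw [sgOrderList_eq_prod]
    rfl
  · rw [Finset.prod_eq_multiset_prod]
    have : (cs : Multiset PreTree).toFinset.val = ((cs.dedup : List PreTree) : Multiset PreTree) := by
      simp [Multiset.toFinset]
    rw [this]
    have : Multiset.map (fun x => ((cs : Multiset PreTree).count x).factorial)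
        ((cs.dedup : List PreTree) : Multiset PreTree)
        = ((cs.dedup.map fun c => (cs.count c).factorial : List ℕ) : Multiset ℕ) := by
      simp [Multiset.map_coe]
    rw [this]
    exact Multiset.prod_coe _

end Weights
section Positions

@[simp] theorem positions_node (cs : List PreTree) :
    positions (node cs) = [] :: positionsList 0 cs := by rw [positions]
@[simp] theorem positionsList_nil (i : ℕ) : positionsList i [] = [] := by rw [positionsList]
@[simp] theorem positionsList_cons (i : ℕ) (t : PreTree) (ts : List PreTree) :
    positionsList i (t :: ts) = (positions t).map (fun p => i :: p) ++ positionsList (i + 1) ts := by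
  rw [positionsList]

@[simp] theorem termPositions_node_nil : termPositions (node []) = [[]] := by rw [termPositions]
theorem termPositions_node_cons (c : PreTree) (cs : List PreTree) :
    termPositions (node (c :: cs)) = termPositionsList 0 (c :: cs) := by rw [termPositions]
@[simp] theorem termPositionsList_nil (i : ℕ) : termPositionsList i [] = [] := by
  rw [termPositionsList]
@[simp] theorem termPositionsList_cons (i : ℕ) (t : PreTree) (ts : List PreTree) :
    termPositionsList i (t :: ts) =
      (termPositions t).map (fun p => i :: p) ++ termPositionsList (i + 1) ts := by
  rw [termPositionsList]

@[simp] theorem addLeafAt_nil (cs : List PreTree) :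
    addLeafAt (node cs) [] = node (cs ++ [leaf]) := by rw [addLeafAt]
@[simp] theorem addLeafAt_cons (cs : List PreTree) (i : ℕ) (p : List ℕ) :
    addLeafAt (node cs) (i :: p) = node (addLeafAtList cs i p) := by rw [addLeafAt]
@[simp] theorem addLeafAtList_nil (i : ℕ) (p : List ℕ) : addLeafAtList [] i p = [] := by
  rw [addLeafAtList]
@[simp] theorem addLeafAtList_zero (t : PreTree) (ts : List PreTree) (p : List ℕ) :
    addLeafAtList (t :: ts) 0 p = addLeafAt t p :: ts := by rw [addLeafAtList]
@[simp] theorem addLeafAtList_succ (t : PreTree) (ts : List PreTree) (i : ℕ) (p : List ℕ) :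
    addLeafAtList (t :: ts) (i + 1) p = t :: addLeafAtList ts i p := by rw [addLeafAtList]

@[simp] theorem removeAt_nil (cs : List PreTree) : removeAt (node cs) [] = node cs := by
  rw [removeAt]
@[simp] theorem removeAt_single (cs : List PreTree) (i : ℕ) :
    removeAt (node cs) [i] = node (cs.eraseIdx i) := by rw [removeAt]
@[simp] theorem removeAt_cons_cons (cs : List PreTree) (i j : ℕ) (p : List ℕ) :
    removeAt (node cs) (i :: j :: p) = node (removeAtList cs i (j :: p)) := by
  rw [removeAt]
  simp
@[simp] theorem removeAtList_nil (i : ℕ) (p : List ℕ) : removeAtList [] i p = [] := by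
  rw [removeAtList]
@[simp] theorem removeAtList_zero (t : PreTree) (ts : List PreTree) (p : List ℕ) :
    removeAtList (t :: ts) 0 p = removeAt t p :: ts := by rw [removeAtList]
@[simp] theorem removeAtList_succ (t : PreTree) (ts : List PreTree) (i : ℕ) (p : List ℕ) :
    removeAtList (t :: ts) (i + 1) p = t :: removeAtList ts i p := by rw [removeAtList]

theorem addLeafAtList_eq_set : ∀ (cs : List PreTree) (j : ℕ) (p : List ℕ), j < cs.length →
    addLeafAtList cs j p = cs.set j (addLeafAt (cs.getD j leaf) p) := by
  intro cs
  induction cs with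
  | nil => intro j p h; simp at h
  | cons c cs ih =>
    intro j p h
    cases j with
    | zero => simp
    | succ j => simp [ih j p (by simpa using h)]

theorem removeAtList_eq_set : ∀ (cs : List PreTree) (j : ℕ) (p : List ℕ), j < cs.length →
    removeAtList cs j p = cs.set j (removeAt (cs.getD j leaf) p) := by
  intro cs
  induction cs with
  | nil => intro j p h; simp at h
  | cons c cs ih =>
    intro j p h
    cases j with
    | zero => simp
    | succ j => simp [ih j p (by simpa using h)]

/-- Enumerate a list starting from `n` (removed from the library). -/
def _root_.List.enumFrom {α : Type*} : ℕ → List α → List (ℕ × α)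
  | _, [] => []
  | n, a :: l => (n, a) :: List.enumFrom (n + 1) l

@[simp] theorem _root_.List.enumFrom_nil {α : Type*} (n : ℕ) :
    List.enumFrom n ([] : List α) = [] := rfl

@[simp] theorem _root_.List.enumFrom_cons {α : Type*} (n : ℕ) (a : α) (l : List α) :
    List.enumFrom n (a :: l) = (n, a) :: List.enumFrom (n + 1) l := rfl

theorem sum_map_positionsList {M : Type*} [AddCommMonoid M] (f : List ℕ → M) :
    ∀ (cs : List PreTree) (i : ℕ),
      ((positionsList i cs).map f).sum =
        ((cs.enumFrom i).map (fun jc => ((positions jc.2).map (fun p => f (jc.1 :: p))).sum)).sum := by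
  intro cs
  induction cs with
  | nil => intro i; simp
  | cons c cs ih =>
    intro i
    rw [positionsList_cons, List.map_append, List.sum_append, List.map_map,
      List.enumFrom_cons, List.map_cons, List.sum_cons, ih (i + 1)]
    rfl

theorem sum_map_termPositionsList {M : Type*} [AddCommMonoid M] (f : List ℕ → M) :
    ∀ (cs : List PreTree) (i : ℕ),
      ((termPositionsList i cs).map f).sum =
        ((cs.enumFrom i).map (fun jc => ((termPositions jc.2).map (fun p => f (jc.1 :: p))).sum)).sum := by
  intro cs
  induction cs with
  | nil => intro i; simp
  | cons c cs ih =>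
    intro i
    rw [termPositionsList_cons, List.map_append, List.sum_append, List.map_map,
      List.enumFrom_cons, List.map_cons, List.sum_cons, ih (i + 1)]
    rfl

theorem termPositions_ne_nil : ∀ t : PreTree, termPositions t ≠ [] := by
  intro t
  induction t using inductionOn with
  | h cs ih =>
    cases cs with
    | nil => simp
    | cons c cs =>
      rw [termPositions_node_cons, termPositionsList_cons]
      have : termPositions c ≠ [] := ih c (by simp)
      intro h
      rw [List.append_eq_nil_iff] at h
      exact this (List.map_eq_nil_iff.mp h.1)

theorem mem_termPositionsList : ∀ (cs : List PreTree) (i : ℕ) (q : List ℕ),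
    q ∈ termPositionsList i cs ↔
      ∃ j, j < cs.length ∧ ∃ p, q = (i + j) :: p ∧ p ∈ termPositions (cs.getD j leaf) := by
  intro cs
  induction cs with
  | nil => intro i q; simp
  | cons c cs ih =>
    intro i q
    rw [termPositionsList_cons, List.mem_append, List.mem_map, ih (i + 1)]
    constructor
    · rintro (⟨p, hp, rfl⟩ | ⟨j, hj, p, rfl, hp⟩)
      · exact ⟨0, by simp, p, by simp, by simpa using hp⟩
      · exact ⟨j + 1, by simpa using hj, p, by rw [show i + 1 + j = i + (j + 1) by omega], by simpa using hp⟩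
    · rintro ⟨j, hj, p, rfl, hp⟩
      cases j with
      | zero => exact Or.inl ⟨p, by simpa using hp, by simp⟩
      | succ j =>
        refine Or.inr ⟨j, by simpa using hj, p, by rw [show i + (j + 1) = i + 1 + j by omega], by simpa using hp⟩

theorem nil_mem_termPositions {t : PreTree} : [] ∈ termPositions t ↔ t = node [] := by
  cases t with
  | node cs =>
    cases cs with
    | nil => simp
    | cons c cs =>
      rw [termPositions_node_cons, mem_termPositionsList]
      simp

theorem length_filter_eq_sum {α : Type*} (P : α → Bool) (l : List α) :
    (l.filter P).length = (l.map (fun a => if P a then 1 else 0)).sum := by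
  induction l with
  | nil => simp
  | cons a l ih =>
    rw [List.filter_cons, List.map_cons, List.sum_cons, ← ih]
    by_cases h : P a <;> simp [h] <;> omega

theorem mem_enumFrom_iff {α : Type*} (d : α) :
    ∀ (l : List α) (n : ℕ) (jc : ℕ × α),
      jc ∈ l.enumFrom n ↔ ∃ k, k < l.length ∧ jc.1 = n + k ∧ l.getD k d = jc.2 := by
  intro l
  induction l with
  | nil => intro n jc; simp
  | cons a l ih =>
    intro n jc
    rw [List.enumFrom_cons, List.mem_cons, ih (n + 1)]
    constructor
    · rintro (rfl | ⟨k, hk, h1, h2⟩)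
      · exact ⟨0, by simp, by simp, by simp⟩
      · exact ⟨k + 1, by simpa using hk, by omega, by simpa using h2⟩
    · rintro ⟨k, hk, h1, h2⟩
      cases k with
      | zero =>
        left
        obtain ⟨j, c⟩ := jc
        simp at h1 h2
        simp [h1, ← h2]
      | succ k =>
        right
        exact ⟨k, by simpa using hk, by omega, by simpa using h2⟩

theorem sum_map_enumFrom_snd {α : Type*} {M : Type*} [AddCommMonoid M]
    (g : α → M) : ∀ (l : List α) (n : ℕ),
    ((l.enumFrom n).map (fun jc => g jc.2)).sum = (l.map g).sum := by
  intro l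
  induction l with
  | nil => intro n; simp
  | cons a l ih =>
    intro n
    rw [List.enumFrom_cons, List.map_cons, List.map_cons, List.sum_cons, List.sum_cons, ih (n + 1)]

theorem sum_map_ite_count {α : Type*} [DecidableEq α] (a : α) (K : ℕ) (l : List α) :
    (l.map (fun x => if x = a then K else 0)).sum = l.count a * K := by
  induction l with
  | nil => simp
  | cons b l ih =>
    rw [List.map_cons, List.sum_cons, ih, List.count_cons]
    by_cases h : b = a <;> simp [h, Nat.add_mul, Nat.add_comm]

theorem cons_coe_ms (a : PreTree) (l : List PreTree) :
    ((a :: l : List PreTree) : Multiset PreTree) = a ::ₘ (l : Multiset PreTree) := rfl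

theorem ms_set {α : Type*} (x d : α) : ∀ (l : List α) (j : ℕ), j < l.length →
    (l.getD j d) ::ₘ ((l.set j x : List α) : Multiset α) = x ::ₘ (l : Multiset α) := by
  intro l
  induction l with
  | nil => intro j h; simp at h
  | cons a l ih =>
    intro j h
    cases j with
    | zero =>
      rw [List.getD_cons_zero, List.set_cons_zero, ← Multiset.cons_coe, ← Multiset.cons_coe,
        Multiset.cons_swap]
    | succ j =>
      have hj : j < l.length := by simpa using h
      rw [List.getD_cons_succ, List.set_cons_succ, ← Multiset.cons_coe, Multiset.cons_swap,
        ih j hj, Multiset.cons_swap, Multiset.cons_coe]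

theorem ms_eraseIdx {α : Type*} (d : α) : ∀ (l : List α) (j : ℕ), j < l.length →
    (l.getD j d) ::ₘ ((l.eraseIdx j : List α) : Multiset α) = (l : Multiset α) := by
  intro l
  induction l with
  | nil => intro j h; simp at h
  | cons a l ih =>
    intro j h
    cases j with
    | zero =>
      rw [List.getD_cons_zero, List.eraseIdx_cons_zero, Multiset.cons_coe]
    | succ j =>
      have hj : j < l.length := by simpa using h
      rw [List.getD_cons_succ, List.eraseIdx_cons_succ, ← Multiset.cons_coe, Multiset.cons_swap,
        ih j hj, Multiset.cons_coe]

theorem getD_mem {α : Type*} {l : List α} {j : ℕ} (d : α) (h : j < l.length) :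
    l.getD j d ∈ l := by
  rw [List.getD_eq_getElem l d h]
  exact List.getElem_mem h

end Positions
section SizeChange

theorem mem_positionsList : ∀ (cs : List PreTree) (i : ℕ) (q : List ℕ),
    q ∈ positionsList i cs ↔
      ∃ j, j < cs.length ∧ ∃ p, q = (i + j) :: p ∧ p ∈ positions (cs.getD j leaf) := by
  intro cs
  induction cs with
  | nil => intro i q; simp
  | cons c cs ih =>
    intro i q
    rw [positionsList_cons, List.mem_append, List.mem_map, ih (i + 1)]
    constructor
    · rintro (⟨p, hp, rfl⟩ | ⟨j, hj, p, rfl, hp⟩)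
      · exact ⟨0, by simp, p, by simp, by simpa using hp⟩
      · exact ⟨j + 1, by simpa using hj, p, by rw [show i + 1 + j = i + (j + 1) by omega],
          by simpa using hp⟩
    · rintro ⟨j, hj, p, rfl, hp⟩
      cases j with
      | zero => exact Or.inl ⟨p, by simpa using hp, by simp⟩
      | succ j =>
        refine Or.inr ⟨j, by simpa using hj, p,
          by rw [show i + (j + 1) = i + 1 + j by omega], by simpa using hp⟩

theorem sizeList_append (l1 l2 : List PreTree) :
    sizeList (l1 ++ l2) = sizeList l1 + sizeList l2 := by
  rw [sizeList_eq_sum, sizeList_eq_sum, sizeList_eq_sum, List.map_append, List.sum_append]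

theorem sizeList_ms (l1 l2 : List PreTree) (h : (l1 : Multiset PreTree) = (l2 : Multiset PreTree)) :
    sizeList l1 = sizeList l2 := by
  rw [sizeList_eq_sum, sizeList_eq_sum]
  have := congrArg (fun m : Multiset PreTree => (m.map size).sum) h
  simpa using this

theorem sizeList_set (cs : List PreTree) (j : ℕ) (y : PreTree) (h : j < cs.length) :
    sizeList (cs.set j y) + size (cs.getD j leaf) = sizeList cs + size y := by
  have hms := ms_set y leaf cs j h
  have := congrArg (fun m : Multiset PreTree => (m.map size).sum) hms
  simp only [Multiset.map_cons, Multiset.sum_cons] at this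
  rw [sizeList_eq_sum, sizeList_eq_sum]
  have e1 : ((Multiset.map size ↑(cs.set j y)).sum : ℕ) = (List.map size (cs.set j y)).sum := by
    simp
  have e2 : ((Multiset.map size (↑cs : Multiset PreTree)).sum : ℕ) = (List.map size cs).sum := by
    simp
  omega

theorem sizeList_eraseIdx (cs : List PreTree) (j : ℕ) (h : j < cs.length) :
    sizeList (cs.eraseIdx j) + size (cs.getD j leaf) = sizeList cs := by
  have hms := ms_eraseIdx leaf cs j h
  have := congrArg (fun m : Multiset PreTree => (m.map size).sum) hms
  simp only [Multiset.map_cons, Multiset.sum_cons] at this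
  rw [sizeList_eq_sum, sizeList_eq_sum]
  have e1 : ((Multiset.map size ↑(cs.eraseIdx j)).sum : ℕ) = (List.map size (cs.eraseIdx j)).sum := by
    simp
  have e2 : ((Multiset.map size (↑cs : Multiset PreTree)).sum : ℕ) = (List.map size cs).sum := by
    simp
  omega

theorem size_addLeafAt : ∀ t : PreTree, ∀ p ∈ positions t, size (addLeafAt t p) = size t + 1 := by
  intro t
  induction t using inductionOn with
  | h cs ih =>
    intro p hp
    rw [positions_node, List.mem_cons] at hp
    rcases hp with rfl | hp
    · rw [addLeafAt_nil, size_node, size_node, sizeList_append]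
      simp [leaf]
      omega
    · rw [mem_positionsList] at hp
      obtain ⟨j, hj, p', rfl, hp'⟩ := hp
      rw [show (0 : ℕ) + j = j by omega] at *
      rw [addLeafAt_cons, addLeafAtList_eq_set cs j p' hj, size_node, size_node]
      have h1 := sizeList_set cs j (addLeafAt (cs.getD j leaf) p') hj
      have h2 := ih (cs.getD j leaf) (getD_mem leaf hj) p' hp'
      omega

theorem size_removeAt : ∀ t : PreTree, ∀ q ∈ termPositions t, 2 ≤ size t →
    size (removeAt t q) + 1 = size t := by
  intro t
  induction t using inductionOn with
  | h cs ih =>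
    intro q hq hsize
    cases cs with
    | nil => simp at hsize
    | cons c cs' =>
      rw [termPositions_node_cons, mem_termPositionsList] at hq
      obtain ⟨j, hj, p, rfl, hp⟩ := hq
      rw [show (0 : ℕ) + j = j by omega] at *
      set l : List PreTree := c :: cs' with hl
      cases p with
      | nil =>
        have hleaf : l.getD j leaf = node [] := nil_mem_termPositions.mp hp
        rw [removeAt_single, size_node, size_node]
        have h1 := sizeList_eraseIdx l j hj
        rw [hleaf] at h1
        simp only [size_node, sizeList_nil] at h1
        omega
      | cons a p' =>
        rw [removeAt_cons_cons, removeAtList_eq_set l j (a :: p') hj, size_node, size_node]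
        have hne : l.getD j leaf ≠ node [] := by
          intro h
          rw [h] at hp
          simp at hp
        have h2le : 2 ≤ size (l.getD j leaf) := by
          cases hgd : l.getD j leaf with
          | node cs2 =>
            cases cs2 with
            | nil => exact absurd hgd hne
            | cons x xs =>
              rw [size_node, sizeList_cons]
              have := size_pos x
              omega
        have h1 := sizeList_set l j (removeAt (l.getD j leaf) (a :: p')) hj
        have h2 := ih (l.getD j leaf) (getD_mem leaf hj) (a :: p') hp h2le
        omega

end SizeChange
section Decomp

theorem leaf_def : leaf = node [] := rfl

@[simp] theorem size_leaf : size leaf = 1 := by rw [leaf_def]; simp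
@[simp] theorem canon_leaf : canon leaf = leaf := isCanon_leaf
@[simp] theorem sgOrder_leaf : sgOrder leaf = 1 := by
  rw [leaf_def, sgOrder_node]; simp
@[simp] theorem hProd_leaf : hProd leaf = 1 := by rw [leaf_def]; simp
@[simp] theorem termPositions_leaf : termPositions leaf = [[]] := by
  rw [leaf_def]; simp

theorem ncoef_eq_sum (s t : PreTree) :
    ncoef s t = ((positions s).map
      (fun p => if canon (addLeafAt s p) = t then 1 else 0)).sum := by
  rw [ncoef, length_filter_eq_sum]
  simp

theorem mcoef_eq_sum (s t : PreTree) :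
    mcoef s t = ((termPositions t).map
      (fun q => if canon (removeAt t q) = s then 1 else 0)).sum := by
  rw [mcoef, length_filter_eq_sum]
  simp

theorem pair_cancel {x y z w : PreTree} {M : Multiset PreTree}
    (h : x ::ₘ y ::ₘ M = z ::ₘ w ::ₘ M) : (x = z ∧ y = w) ∨ (x = w ∧ y = z) := by
  have h2 : (x ::ₘ y ::ₘ 0) + M = (z ::ₘ w ::ₘ 0) + M := by
    simpa [Multiset.cons_add] using h
  have h3 := add_right_cancel h2
  rw [Multiset.cons_eq_cons] at h3
  rcases h3 with ⟨hxz, h4⟩ | ⟨hne, u, h5, h6⟩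
  · left
    refine ⟨hxz, ?_⟩
    have h5 : ({y} : Multiset PreTree) = {w} := by simpa using h4
    exact Multiset.singleton_inj.mp h5
  · right
    have hu : u = 0 := by
      have hcard := congrArg Multiset.card h5
      rw [Multiset.card_cons, Multiset.card_cons, Multiset.card_zero] at hcard
      exact Multiset.card_eq_zero.mp (by omega)
    subst hu
    constructor
    · have h7 : ({w} : Multiset PreTree) = {x} := by simpa using h6
      exact (Multiset.singleton_inj.mp h7).symm
    · have h7 : ({y} : Multiset PreTree) = {z} := by simpa using h5
      exact Multiset.singleton_inj.mp h7

theorem getD_of_enumFrom {l : List PreTree} {jc : ℕ × PreTree} (h : jc ∈ l.enumFrom 0) :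
    jc.1 < l.length ∧ l.getD jc.1 leaf = jc.2 := by
  obtain ⟨k, hk, h1, h2⟩ := (mem_enumFrom_iff leaf l 0 jc).mp h
  have : jc.1 = k := by omega
  subst this
  exact ⟨hk, h2⟩

theorem ncoef_decomp {ss ts : List PreTree} (hs : IsCanon (node ss)) (ht : IsCanon (node ts)) :
    ncoef (node ss) (node ts)
      = (if (↑ts : Multiset PreTree) = leaf ::ₘ ↑ss then 1 else 0)
        + ((ss.enumFrom 0).map (fun jc =>
            ((positions jc.2).map (fun p =>
              if jc.2 ::ₘ (↑ts : Multiset PreTree) = canon (addLeafAt jc.2 p) ::ₘ ↑ss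
              then 1 else 0)).sum)).sum := by
  rw [ncoef_eq_sum, positions_node, List.map_cons, List.sum_cons]
  congr 1
  · rw [addLeafAt_nil]
    have hcl : canonList (ss ++ [leaf]) = ss ++ [leaf] := by
      apply canonList_eq_self
      intro c hc
      rw [List.mem_append] at hc
      rcases hc with hc | hc
      · exact hs.children c hc
      · simp at hc; rw [hc]; exact isCanon_leaf
    have h1 : (canon (node (ss ++ [leaf])) = node ts) ↔
        ((↑ts : Multiset PreTree) = leaf ::ₘ ↑ss) := by
      rw [canon_node_eq_canonical ht, hcl]
      have : ((ss ++ [leaf] : List PreTree) : Multiset PreTree) = leaf ::ₘ ↑ss := by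
        simp [Multiset.singleton_add]
      rw [this, eq_comm]
    simp only [h1]
  · rw [sum_map_positionsList]
    apply congrArg List.sum
    apply List.map_congr_left
    intro jc hjc
    obtain ⟨hj, hgd⟩ := getD_of_enumFrom hjc
    apply congrArg List.sum
    apply List.map_congr_left
    intro p hp
    have e1 : addLeafAt (node ss) (jc.1 :: p) = node (ss.set jc.1 (addLeafAt jc.2 p)) := by
      rw [addLeafAt_cons, addLeafAtList_eq_set ss jc.1 p hj, hgd]
    have hmapset : canonList (ss.set jc.1 (addLeafAt jc.2 p))
        = ss.set jc.1 (canon (addLeafAt jc.2 p)) := by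
      rw [canonList_eq_map, List.map_set]
      congr 1
      rw [← canonList_eq_map]
      exact canonList_eq_self hs.children
    have hmm := ms_set (canon (addLeafAt jc.2 p)) leaf ss jc.1 hj
    rw [hgd] at hmm
    have e2 : canon (node (ss.set jc.1 (addLeafAt jc.2 p))) = node ts ↔
        jc.2 ::ₘ (↑ts : Multiset PreTree) = canon (addLeafAt jc.2 p) ::ₘ ↑ss := by
      rw [canon_node_eq_canonical ht, hmapset]
      constructor
      · intro h
        rw [← h]
        exact hmm
      · intro h
        have h2 : jc.2 ::ₘ ((ss.set jc.1 (canon (addLeafAt jc.2 p)) : List PreTree) : Multiset PreTree)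
            = jc.2 ::ₘ (↑ts : Multiset PreTree) := hmm.trans h.symm
        exact (Multiset.cons_inj_right _).mp h2
    rw [e1]
    simp only [e2]

theorem mcoef_decomp {ss ts : List PreTree} (hs : IsCanon (node ss)) (ht : IsCanon (node ts))
    (hne : ts ≠ []) :
    mcoef (node ss) (node ts)
      = ((ts.enumFrom 0).map (fun jc =>
          if jc.2 = leaf then (if (↑ts : Multiset PreTree) = leaf ::ₘ ↑ss then 1 else 0)
          else ((termPositions jc.2).map (fun p =>
            if jc.2 ::ₘ (↑ss : Multiset PreTree) = canon (removeAt jc.2 p) ::ₘ ↑ts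
            then 1 else 0)).sum)).sum := by
  have hterm : termPositions (node ts) = termPositionsList 0 ts := by
    cases ts with
    | nil => exact absurd rfl hne
    | cons c cs' => rw [termPositions_node_cons]
  rw [mcoef_eq_sum, hterm, sum_map_termPositionsList]
  apply congrArg List.sum
  apply List.map_congr_left
  intro jc hjc
  obtain ⟨hj, hgd⟩ := getD_of_enumFrom hjc
  by_cases hleaf : jc.2 = leaf
  · rw [if_pos hleaf, hleaf, termPositions_leaf, List.map_cons, List.map_nil, List.sum_cons,
      List.sum_nil, Nat.add_zero]
    have e1 : removeAt (node ts) (jc.1 :: []) = node (ts.eraseIdx jc.1) := removeAt_single ts jc.1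
    have hcl : canonList (ts.eraseIdx jc.1) = ts.eraseIdx jc.1 := by
      apply canonList_eq_self
      intro x hx
      exact ht.children x (List.mem_of_mem_eraseIdx hx)
    have hmm := ms_eraseIdx leaf ts jc.1 hj
    rw [hgd, hleaf] at hmm
    have e2 : canon (node (ts.eraseIdx jc.1)) = node ss ↔
        (↑ts : Multiset PreTree) = leaf ::ₘ ↑ss := by
      rw [canon_node_eq_canonical hs, hcl]
      constructor
      · intro h
        rw [← hmm, h]
      · intro h
        have h2 : leaf ::ₘ ((ts.eraseIdx jc.1 : List PreTree) : Multiset PreTree)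
            = leaf ::ₘ (↑ss : Multiset PreTree) := by rw [hmm, h]
        exact (Multiset.cons_inj_right _).mp h2
    rw [e1]
    simp only [e2]
  · rw [if_neg hleaf]
    apply congrArg List.sum
    apply List.map_congr_left
    intro p hp
    obtain ⟨a, p', rfl⟩ : ∃ a p', p = a :: p' := by
      cases p with
      | nil =>
        exfalso
        exact hleaf (by rw [leaf_def]; exact nil_mem_termPositions.mp hp)
      | cons a p' => exact ⟨a, p', rfl⟩
    have e1 : removeAt (node ts) (jc.1 :: a :: p') = node (ts.set jc.1 (removeAt jc.2 (a :: p'))) := by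
      rw [removeAt_cons_cons, removeAtList_eq_set ts jc.1 (a :: p') hj, hgd]
    have hmapset : canonList (ts.set jc.1 (removeAt jc.2 (a :: p')))
        = ts.set jc.1 (canon (removeAt jc.2 (a :: p'))) := by
      rw [canonList_eq_map, List.map_set]
      congr 1
      rw [← canonList_eq_map]
      exact canonList_eq_self ht.children
    have hmm := ms_set (canon (removeAt jc.2 (a :: p'))) leaf ts jc.1 hj
    rw [hgd] at hmm
    have e2 : canon (node (ts.set jc.1 (removeAt jc.2 (a :: p')))) = node ss ↔
        jc.2 ::ₘ (↑ss : Multiset PreTree) = canon (removeAt jc.2 (a :: p')) ::ₘ ↑ts := by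
      rw [canon_node_eq_canonical hs, hmapset]
      constructor
      · intro h
        rw [← h]
        exact hmm
      · intro h
        have h2 : jc.2 ::ₘ ((ts.set jc.1 (canon (removeAt jc.2 (a :: p'))) : List PreTree) : Multiset PreTree)
            = jc.2 ::ₘ (↑ss : Multiset PreTree) := hmm.trans h.symm
        exact (Multiset.cons_inj_right _).mp h2
    rw [e1]
    simp only [e2]

end Decomp
section Exchange

/-- The child part of the growth-coefficient decomposition. -/
def nSum (ss ts : List PreTree) : ℕ :=
  ((ss.enumFrom 0).map (fun jc =>
    ((positions jc.2).map (fun p =>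
      if jc.2 ::ₘ (↑ts : Multiset PreTree) = canon (addLeafAt jc.2 p) ::ₘ ↑ss
      then 1 else 0)).sum)).sum

/-- The pruning-coefficient decomposition. -/
def mSum (ss ts : List PreTree) : ℕ :=
  ((ts.enumFrom 0).map (fun jc =>
    if jc.2 = leaf then (if (↑ts : Multiset PreTree) = leaf ::ₘ ↑ss then 1 else 0)
    else ((termPositions jc.2).map (fun p =>
      if jc.2 ::ₘ (↑ss : Multiset PreTree) = canon (removeAt jc.2 p) ::ₘ ↑ts
      then 1 else 0)).sum)).sum

theorem ncoef_decomp' {ss ts : List PreTree} (hs : IsCanon (node ss)) (ht : IsCanon (node ts)) :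
    ncoef (node ss) (node ts)
      = (if (↑ts : Multiset PreTree) = leaf ::ₘ ↑ss then 1 else 0) + nSum ss ts :=
  ncoef_decomp hs ht

theorem mcoef_decomp' {ss ts : List PreTree} (hs : IsCanon (node ss)) (ht : IsCanon (node ts))
    (hne : ts ≠ []) : mcoef (node ss) (node ts) = mSum ss ts :=
  mcoef_decomp hs ht hne

theorem nSum_eq_zero {ss ts : List PreTree}
    (h : ¬ ∃ a b : PreTree, a ::ₘ (↑ts : Multiset PreTree) = b ::ₘ ↑ss ∧ size b = size a + 1) :
    nSum ss ts = 0 := by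
  apply List.sum_eq_zero
  intro x hx
  rw [List.mem_map] at hx
  obtain ⟨jc, hjc, rfl⟩ := hx
  apply List.sum_eq_zero
  intro y hy
  rw [List.mem_map] at hy
  obtain ⟨p, hp, rfl⟩ := hy
  rw [if_neg]
  intro hcond
  refine h ⟨jc.2, canon (addLeafAt jc.2 p), hcond, ?_⟩
  rw [size_canon]
  exact size_addLeafAt jc.2 p hp

theorem size_two_le_of_ne_leaf {c : PreTree} (h : c ≠ leaf) : 2 ≤ size c := by
  cases c with
  | node cs =>
    cases cs with
    | nil => exact absurd rfl (by rwa [leaf_def] at h)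
    | cons x xs =>
      rw [size_node, sizeList_cons]
      have := size_pos x
      omega

theorem mSum_eq_zero {ss ts : List PreTree}
    (hnR : ¬ ((↑ts : Multiset PreTree) = leaf ::ₘ ↑ss))
    (h : ¬ ∃ a b : PreTree, a ::ₘ (↑ts : Multiset PreTree) = b ::ₘ ↑ss ∧ size b = size a + 1) :
    mSum ss ts = 0 := by
  apply List.sum_eq_zero
  intro x hx
  rw [List.mem_map] at hx
  obtain ⟨jc, hjc, rfl⟩ := hx
  by_cases hleaf : jc.2 = leaf
  · rw [if_pos hleaf, if_neg hnR]
  · rw [if_neg hleaf]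
    apply List.sum_eq_zero
    intro y hy
    rw [List.mem_map] at hy
    obtain ⟨p, hp, rfl⟩ := hy
    rw [if_neg]
    intro hcond
    refine h ⟨canon (removeAt jc.2 p), jc.2, hcond.symm, ?_⟩
    rw [size_canon]
    have := size_removeAt jc.2 p hp (size_two_le_of_ne_leaf hleaf)
    omega

theorem card_absurd {ss : List PreTree} {x y z : PreTree}
    (h : x ::ₘ y ::ₘ (↑ss : Multiset PreTree) = z ::ₘ ↑ss) : False := by
  have := congrArg Multiset.card h
  simp only [Multiset.card_cons] at this
  omega

theorem mSum_caseR {ss ts : List PreTree}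
    (hR : (↑ts : Multiset PreTree) = leaf ::ₘ ↑ss) :
    mSum ss ts = ts.count leaf := by
  unfold mSum
  have hcongr : ∀ jc ∈ ts.enumFrom 0,
      (if jc.2 = leaf then (if (↑ts : Multiset PreTree) = leaf ::ₘ ↑ss then 1 else 0)
       else ((termPositions jc.2).map (fun p =>
         if jc.2 ::ₘ (↑ss : Multiset PreTree) = canon (removeAt jc.2 p) ::ₘ ↑ts
         then 1 else 0)).sum)
      = (if jc.2 = leaf then 1 else 0) := by
    intro jc _
    by_cases hleaf : jc.2 = leaf
    · rw [if_pos hleaf, if_pos hR, if_pos hleaf]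
    · rw [if_neg hleaf, if_neg hleaf]
      apply List.sum_eq_zero
      intro y hy
      rw [List.mem_map] at hy
      obtain ⟨p, hp, rfl⟩ := hy
      rw [if_neg]
      intro hcond
      rw [hR] at hcond
      exact card_absurd ((Multiset.cons_swap _ _ _).trans hcond.symm)
  rw [List.map_congr_left hcongr,
    sum_map_enumFrom_snd (fun c : PreTree => if c = leaf then 1 else 0) ts 0,
    sum_map_ite_count, Nat.mul_one]

theorem nSum_caseC {ss ts : List PreTree} {a b : PreTree}
    (hC : a ::ₘ (↑ts : Multiset PreTree) = b ::ₘ ↑ss) (hab : size b = size a + 1) :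
    nSum ss ts = ss.count a * ncoef a b := by
  have hanb : a ≠ b := by
    intro h
    rw [h] at hab
    omega
  unfold nSum
  have hcongr : ∀ jc ∈ ss.enumFrom 0,
      ((positions jc.2).map (fun p =>
        if jc.2 ::ₘ (↑ts : Multiset PreTree) = canon (addLeafAt jc.2 p) ::ₘ ↑ss
        then 1 else 0)).sum
      = (if jc.2 = a then ncoef a b else 0) := by
    intro jc _
    by_cases hja : jc.2 = a
    · rw [if_pos hja, hja]
      rw [ncoef_eq_sum]
      apply congrArg List.sum
      apply List.map_congr_left
      intro p hp
      have hiff : (a ::ₘ (↑ts : Multiset PreTree) = canon (addLeafAt a p) ::ₘ ↑ss)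
          ↔ canon (addLeafAt a p) = b := by
        constructor
        · intro h
          have h2 : canon (addLeafAt a p) ::ₘ (↑ss : Multiset PreTree) = b ::ₘ ↑ss :=
            h.symm.trans hC
          exact (Multiset.cons_inj_left _).mp h2
        · intro h
          rw [h]
          exact hC
      simp only [hiff]
    · rw [if_neg hja]
      apply List.sum_eq_zero
      intro y hy
      rw [List.mem_map] at hy
      obtain ⟨p, hp, rfl⟩ := hy
      rw [if_neg]
      intro hcond
      have h1 : a ::ₘ jc.2 ::ₘ (↑ts : Multiset PreTree)
          = b ::ₘ jc.2 ::ₘ (↑ss : Multiset PreTree) := by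
        rw [Multiset.cons_swap, hC, Multiset.cons_swap]
      have h2 : a ::ₘ jc.2 ::ₘ (↑ts : Multiset PreTree)
          = a ::ₘ canon (addLeafAt jc.2 p) ::ₘ (↑ss : Multiset PreTree) := by
        rw [hcond]
      have h3 := h2.symm.trans h1
      rcases pair_cancel h3 with ⟨h4, h5⟩ | ⟨h4, h5⟩
      · exact hanb h4
      · exact hja h4.symm
  rw [List.map_congr_left hcongr,
    sum_map_enumFrom_snd (fun c : PreTree => if c = a then ncoef a b else 0) ss 0,
    sum_map_ite_count]

theorem mSum_caseC {ss ts : List PreTree} {a b : PreTree}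
    (hnR : ¬ ((↑ts : Multiset PreTree) = leaf ::ₘ ↑ss))
    (hC : a ::ₘ (↑ts : Multiset PreTree) = b ::ₘ ↑ss) (hab : size b = size a + 1) :
    mSum ss ts = ts.count b * mcoef a b := by
  have hanb : a ≠ b := by
    intro h
    rw [h] at hab
    omega
  unfold mSum
  have hcongr : ∀ jc ∈ ts.enumFrom 0,
      (if jc.2 = leaf then (if (↑ts : Multiset PreTree) = leaf ::ₘ ↑ss then 1 else 0)
       else ((termPositions jc.2).map (fun p =>
         if jc.2 ::ₘ (↑ss : Multiset PreTree) = canon (removeAt jc.2 p) ::ₘ ↑ts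
         then 1 else 0)).sum)
      = (if jc.2 = b then mcoef a b else 0) := by
    intro jc _
    by_cases hleaf : jc.2 = leaf
    · have hjb : jc.2 ≠ b := by
        intro h
        rw [← h] at hab
        rw [hleaf] at hab
        simp at hab
        have := size_pos a
        omega
      rw [if_pos hleaf, if_neg hnR, if_neg hjb]
    · rw [if_neg hleaf]
      by_cases hjb : jc.2 = b
      · rw [if_pos hjb, hjb]
        rw [mcoef_eq_sum]
        apply congrArg List.sum
        apply List.map_congr_left
        intro p hp
        have hiff : (b ::ₘ (↑ss : Multiset PreTree) = canon (removeAt b p) ::ₘ ↑ts)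
            ↔ canon (removeAt b p) = a := by
          constructor
          · intro h
            have h2 : canon (removeAt b p) ::ₘ (↑ts : Multiset PreTree) = a ::ₘ ↑ts :=
              h.symm.trans hC.symm
            exact (Multiset.cons_inj_left _).mp h2
          · intro h
            rw [h]
            exact hC.symm
        simp only [hiff]
      · rw [if_neg hjb]
        apply List.sum_eq_zero
        intro y hy
        rw [List.mem_map] at hy
        obtain ⟨p, hp, rfl⟩ := hy
        rw [if_neg]
        intro hcond
        have h1 : b ::ₘ jc.2 ::ₘ (↑ss : Multiset PreTree)
            = a ::ₘ jc.2 ::ₘ (↑ts : Multiset PreTree) := by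
          rw [Multiset.cons_swap, ← hC, Multiset.cons_swap]
        have h2 : b ::ₘ jc.2 ::ₘ (↑ss : Multiset PreTree)
            = b ::ₘ canon (removeAt jc.2 p) ::ₘ (↑ts : Multiset PreTree) := by
          rw [hcond]
        have h3 := h2.symm.trans h1
        rcases pair_cancel h3 with ⟨h4, h5⟩ | ⟨h4, h5⟩
        · exact hanb h4.symm
        · exact hjb h4.symm
  rw [List.map_congr_left hcongr,
    sum_map_enumFrom_snd (fun c : PreTree => if c = b then mcoef a b else 0) ts 0,
    sum_map_ite_count]

theorem exchange_aux : ∀ N : ℕ, ∀ s t : PreTree, size t ≤ N → IsCanon s → IsCanon t →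
    size t = size s + 1 → mcoef s t * sgOrder s = ncoef s t * sgOrder t := by
  intro N
  induction N with
  | zero =>
    intro s t hN _ _ _
    have := size_pos t
    omega
  | succ N ihN =>
    intro s t hN hs ht hsz
    cases s with | node ss =>
    cases t with | node ts =>
    have hts_ne : ts ≠ [] := by
      intro h
      subst h
      rw [size_node, size_node, sizeList_nil] at hsz
      have : 0 < sizeList ss + 1 := by omega
      omega
    rw [ncoef_decomp' hs ht, mcoef_decomp' hs ht hts_ne]
    by_cases hR : (↑ts : Multiset PreTree) = leaf ::ₘ ↑ss
    · -- Case R: a new leaf attached to the root.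
      have hn0 : nSum ss ts = 0 := by
        apply nSum_eq_zero
        rintro ⟨a, b, hab1, _⟩
        rw [hR] at hab1
        exact card_absurd hab1
      have hm : mSum ss ts = ts.count leaf := mSum_caseR hR
      have hcnt : ts.count leaf = ss.count leaf + 1 := by
        have := congrArg (fun m : Multiset PreTree => m.count leaf) hR
        simpa [Multiset.count_cons_self] using this
      have hst : sgOrder (node ts) = (ss.count leaf + 1) * sgOrder (node ss) := by
        rw [sgOrder_eq_msSG ht.children, sgOrder_eq_msSG hs.children, hR, msSG_cons,
          sgOrder_leaf, Multiset.coe_count]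
        ring
      rw [hm, hcnt, hst, if_pos hR, hn0]
      ring
    · by_cases hC : ∃ a b : PreTree,
          a ::ₘ (↑ts : Multiset PreTree) = b ::ₘ ↑ss ∧ size b = size a + 1
      · -- Case C: growth inside one of the children.
        obtain ⟨a, b, hC, hab⟩ := hC
        have hanb : a ≠ b := by
          intro h
          rw [h] at hab
          omega
        have ha_mem : a ∈ ss := by
          have : a ∈ b ::ₘ (↑ss : Multiset PreTree) := by
            rw [← hC]
            exact Multiset.mem_cons_self _ _
          rcases Multiset.mem_cons.mp this with h | h
          · exact absurd h hanb
          · exact Multiset.mem_coe.mp h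
        have hb_mem : b ∈ ts := by
          have : b ∈ a ::ₘ (↑ts : Multiset PreTree) := by
            rw [hC]
            exact Multiset.mem_cons_self _ _
          rcases Multiset.mem_cons.mp this with h | h
          · exact absurd h.symm hanb
          · exact Multiset.mem_coe.mp h
        set S0 : Multiset PreTree := (↑ss : Multiset PreTree).erase a with hS0
        have hS : (↑ss : Multiset PreTree) = a ::ₘ S0 :=
          (Multiset.cons_erase (Multiset.mem_coe.mpr ha_mem)).symm
        have hT : (↑ts : Multiset PreTree) = b ::ₘ S0 := by
          have h1 : a ::ₘ (↑ts : Multiset PreTree) = a ::ₘ b ::ₘ S0 := by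
            rw [hC, hS, Multiset.cons_swap]
          exact (Multiset.cons_inj_right _).mp h1
        have hcount_a : ss.count a = S0.count a + 1 := by
          have := congrArg (fun m : Multiset PreTree => m.count a) hS
          simpa [Multiset.count_cons_self, Multiset.coe_count] using this
        have hcount_b : ts.count b = S0.count b + 1 := by
          have := congrArg (fun m : Multiset PreTree => m.count b) hT
          simpa [Multiset.count_cons_self, Multiset.coe_count] using this
        have hss : sgOrder (node ss) = sgOrder a * (S0.count a + 1) * msSG S0 := by
          rw [sgOrder_eq_msSG hs.children, hS, msSG_cons]
        have hts : sgOrder (node ts) = sgOrder b * (S0.count b + 1) * msSG S0 := by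
          rw [sgOrder_eq_msSG ht.children, hT, msSG_cons]
        have hbN : size b ≤ N := by
          have h1 : size b ≤ sizeList ts := size_le_sizeList hb_mem
          rw [size_node] at hN
          omega
        have key := ihN a b hbN (hs.children a ha_mem) (ht.children b hb_mem) hab
        rw [mSum_caseC hR hC hab, nSum_caseC hC hab, if_neg hR, hss, hts,
          hcount_a, hcount_b]
        calc (S0.count b + 1) * mcoef a b * (sgOrder a * (S0.count a + 1) * msSG S0)
            = (S0.count b + 1) * (S0.count a + 1) * msSG S0 * (mcoef a b * sgOrder a) := by
              ring
          _ = (S0.count b + 1) * (S0.count a + 1) * msSG S0 * (ncoef a b * sgOrder b) := by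
              rw [key]
          _ = (0 + (S0.count a + 1) * ncoef a b) * (sgOrder b * (S0.count b + 1) * msSG S0) := by
              ring
      · -- Case N: no relation, both coefficients vanish.
        rw [nSum_eq_zero hC, mSum_eq_zero hR hC, if_neg hR]
        simp

theorem exchange {s t : PreTree} (hs : IsCanon s) (ht : IsCanon t)
    (hsz : size t = size s + 1) :
    mcoef s t * sgOrder s = ncoef s t * sgOrder t :=
  exchange_aux (size t) s t le_rfl hs ht hsz

end Exchange
section HProdSum

theorem hProdList_set (cs : List PreTree) (j : ℕ) (y : PreTree) (h : j < cs.length) :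
    hProdList (cs.set j y) * hProd (cs.getD j leaf) = hProdList cs * hProd y := by
  have hms := ms_set y leaf cs j h
  have hthis := congrArg (fun m : Multiset PreTree => (m.map hProd).prod) hms
  simp only [Multiset.map_cons, Multiset.prod_cons] at hthis
  have e1 : ((Multiset.map hProd ↑(cs.set j y)).prod : ℕ) = (List.map hProd (cs.set j y)).prod := by
    simp
  have e2 : ((Multiset.map hProd (↑cs : Multiset PreTree)).prod : ℕ) = (List.map hProd cs).prod := by
    simp
  rw [e1, e2] at hthis
  rw [hProdList_eq_prod, hProdList_eq_prod, Nat.mul_comm, Nat.mul_comm (List.map hProd cs).prod]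
  exact hthis

theorem hProdList_eraseIdx (cs : List PreTree) (j : ℕ) (h : j < cs.length) :
    hProdList (cs.eraseIdx j) * hProd (cs.getD j leaf) = hProdList cs := by
  have hms := ms_eraseIdx leaf cs j h
  have hthis := congrArg (fun m : Multiset PreTree => (m.map hProd).prod) hms
  simp only [Multiset.map_cons, Multiset.prod_cons] at hthis
  have e1 : ((Multiset.map hProd ↑(cs.eraseIdx j)).prod : ℕ)
      = (List.map hProd (cs.eraseIdx j)).prod := by simp
  have e2 : ((Multiset.map hProd (↑cs : Multiset PreTree)).prod : ℕ) = (List.map hProd cs).prod := by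
    simp
  rw [e1, e2] at hthis
  rw [hProdList_eq_prod, hProdList_eq_prod, Nat.mul_comm]
  exact hthis

/-- The key ℕ-identity for a single pruning step. -/
theorem hProd_removeAt_step {l : List PreTree} {jc : ℕ × PreTree} {p : List ℕ}
    (hjc : jc ∈ l.enumFrom 0) (hp : p ∈ termPositions jc.2) :
    hProd (removeAt (node l) (jc.1 :: p)) * (1 + sizeList l) * hProd jc.2
      = hProd (node l) * sizeList l * hProd (removeAt jc.2 p) := by
  obtain ⟨hj, hgd⟩ := getD_of_enumFrom hjc
  cases p with
  | nil =>
    have hleaf : jc.2 = node [] := nil_mem_termPositions.mp hp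
    have h1 := sizeList_eraseIdx l jc.1 hj
    have h2 := hProdList_eraseIdx l jc.1 hj
    rw [hgd, hleaf] at h1 h2
    simp only [size_node, sizeList_nil] at h1
    have h2' : hProdList (l.eraseIdx jc.1) = hProdList l := by
      simp only [hProd_node, size_node, sizeList_nil, hProdList_nil] at h2
      omega
    rw [removeAt_single, hleaf, removeAt_nil]
    rw [hProd_node (l.eraseIdx jc.1), hProd_node l, hProd_node ([] : List PreTree)]
    simp only [size_node, sizeList_nil, hProdList_nil]
    rw [h2']
    have hS : sizeList l = sizeList (l.eraseIdx jc.1) + 1 := by omega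
    rw [hS]
    ring
  | cons a p' =>
    have hne : jc.2 ≠ leaf := by
      intro h
      rw [h] at hp
      simp at hp
    have h2le : 2 ≤ size jc.2 := size_two_le_of_ne_leaf hne
    rw [removeAt_cons_cons, removeAtList_eq_set l jc.1 (a :: p') hj, hgd]
    have h1 := sizeList_set l jc.1 (removeAt jc.2 (a :: p')) hj
    have h2 := hProdList_set l jc.1 (removeAt jc.2 (a :: p')) hj
    rw [hgd] at h1 h2
    have h3 := size_removeAt jc.2 (a :: p') hp h2le
    have hS : sizeList l = sizeList (l.set jc.1 (removeAt jc.2 (a :: p'))) + 1 := by omega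
    rw [hProd_node, hProd_node, size_node, size_node, hS]
    have h2z : (hProdList (l.set jc.1 (removeAt jc.2 (a :: p'))) : ℤ) * (hProd jc.2 : ℤ)
        = (hProdList l : ℤ) * (hProd (removeAt jc.2 (a :: p')) : ℤ) := by
      exact_mod_cast h2
    zify
    linear_combination ((sizeList (l.set jc.1 (removeAt jc.2 (a :: p'))) : ℤ) + 1)
      * ((sizeList (l.set jc.1 (removeAt jc.2 (a :: p'))) : ℤ) + 2) * h2z

theorem hProd_ratio_sum : ∀ t : PreTree,
    ((termPositions t).map (fun q => (hProd t : ℚ) / hProd (removeAt t q))).sum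
      = (size t : ℚ) := by
  intro t
  induction t using inductionOn with
  | h cs ih =>
    cases cs with
    | nil => simp
    | cons c cs' =>
      set l : List PreTree := c :: cs' with hl
      have hsz_pos : 1 ≤ sizeList l := by
        rw [hl, sizeList_cons]
        have := size_pos c
        omega
      have hsl : ((sizeList l : ℚ)) ≠ 0 := Nat.cast_ne_zero.mpr (by omega)
      rw [termPositions_node_cons, ← hl, sum_map_termPositionsList]
      have hpoint : ∀ jc ∈ l.enumFrom 0,
          ((termPositions jc.2).map
            (fun p => (hProd (node l) : ℚ) / hProd (removeAt (node l) (jc.1 :: p)))).sum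
          = ((1 : ℚ) + sizeList l) / (sizeList l) * (size jc.2 : ℚ) := by
        intro jc hjc
        obtain ⟨hj, hgd⟩ := getD_of_enumFrom hjc
        have hmem : jc.2 ∈ l := by
          rw [← hgd]
          exact getD_mem leaf hj
        have hinner : ∀ p ∈ termPositions jc.2,
            (hProd (node l) : ℚ) / hProd (removeAt (node l) (jc.1 :: p))
            = ((1 : ℚ) + sizeList l) / (sizeList l) *
                ((hProd jc.2 : ℚ) / hProd (removeAt jc.2 p)) := by
          intro p hp
          have hkey := hProd_removeAt_step hjc hp
          have d1 : (hProd (removeAt (node l) (jc.1 :: p)) : ℚ) ≠ 0 :=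
            Nat.cast_ne_zero.mpr (hProd_pos _).ne'
          have d2 : (hProd (removeAt jc.2 p) : ℚ) ≠ 0 :=
            Nat.cast_ne_zero.mpr (hProd_pos _).ne'
          have hkeyQ : (hProd (removeAt (node l) (jc.1 :: p)) : ℚ) * (1 + (sizeList l : ℚ))
                * (hProd jc.2 : ℚ)
              = (hProd (node l) : ℚ) * (sizeList l : ℚ) * (hProd (removeAt jc.2 p) : ℚ) := by
            exact_mod_cast hkey
          rw [div_mul_div_comm, div_eq_div_iff d1 (mul_ne_zero hsl d2)]
          linear_combination -hkeyQ
        rw [List.map_congr_left hinner, List.sum_map_mul_left, ih jc.2 hmem]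
      rw [List.map_congr_left hpoint, List.sum_map_mul_left,
        sum_map_enumFrom_snd (fun c : PreTree => (size c : ℚ)) l 0]
      have hsum : ((l.map (fun c : PreTree => (size c : ℚ))).sum) = (sizeList l : ℚ) := by
        rw [sizeList_eq_sum]
        push_cast
        rw [List.map_map]
        rfl
      rw [hsum, size_node]
      have hfin : ((1 : ℚ) + sizeList l) / (sizeList l) * (sizeList l) = 1 + sizeList l := by
        field_simp
      rw [hfin]
      push_cast
      ring

end HProdSum
section TreeList

theorem treeList_zero : treeList 0 = [] := by rw [treeList]
theorem treeList_one : treeList 1 = [leaf] := by rw [treeList]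
theorem treeList_succ_succ (n : ℕ) :
    treeList (n + 2) = ((treeList (n + 1)).flatMap
      (fun t => (positions t).map (fun p => canon (addLeafAt t p)))).dedup := by
  rw [treeList]

theorem mem_treeList : ∀ (n : ℕ) (t : PreTree), t ∈ treeList n → IsCanon t ∧ size t = n := by
  intro n
  induction n using Nat.strong_induction_on with
  | _ n ih =>
    match n with
    | 0 => intro t ht; rw [treeList_zero] at ht; simp at ht
    | 1 =>
      intro t ht
      rw [treeList_one] at ht
      simp at ht
      subst ht
      exact ⟨isCanon_leaf, by simp⟩
    | (n + 2) =>
      intro t ht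
      rw [treeList_succ_succ, List.mem_dedup, List.mem_flatMap] at ht
      obtain ⟨u, hu, ht⟩ := ht
      rw [List.mem_map] at ht
      obtain ⟨p, hp, rfl⟩ := ht
      obtain ⟨hu1, hu2⟩ := ih (n + 1) (by omega) u hu
      exact ⟨isCanon_canon _, by rw [size_canon, size_addLeafAt u p hp, hu2]⟩

theorem nodup_treeList : ∀ n : ℕ, (treeList n).Nodup := by
  intro n
  match n with
  | 0 => rw [treeList_zero]; simp
  | 1 => rw [treeList_one]; simp
  | n + 2 => rw [treeList_succ_succ]; exact List.nodup_dedup _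

theorem sizeList_eq_zero {cs : List PreTree} (h : sizeList cs = 0) : cs = [] := by
  cases cs with
  | nil => rfl
  | cons c cs =>
    rw [sizeList_cons] at h
    have := size_pos c
    omega

theorem complete_treeList : ∀ (n : ℕ) (t : PreTree), IsCanon t → size t = n + 1 →
    t ∈ treeList (n + 1) := by
  intro n
  induction n with
  | zero =>
    intro t h1 h2
    cases t with | node cs =>
    rw [size_node] at h2
    have hcs : cs = [] := sizeList_eq_zero (by omega)
    subst hcs
    rw [treeList_one]
    simp [leaf_def]
  | succ n ihn =>
    intro t h1 h2
    have h2le : 2 ≤ size t := by omega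
    obtain ⟨q, hq⟩ := List.exists_mem_of_ne_nil _ (termPositions_ne_nil t)
    have hu1 : IsCanon (canon (removeAt t q)) := isCanon_canon _
    have hu2 : size (canon (removeAt t q)) = n + 1 := by
      rw [size_canon]
      have := size_removeAt t q hq h2le
      omega
    have humem : canon (removeAt t q) ∈ treeList (n + 1) := ihn _ hu1 hu2
    have hqin : q ∈ (termPositions t).filter
        (fun p => canon (removeAt t p) = canon (removeAt t q)) :=
      List.mem_filter.mpr ⟨hq, decide_eq_true rfl⟩
    have hm : 0 < mcoef (canon (removeAt t q)) t :=
      List.length_pos_iff.mpr (List.ne_nil_of_mem hqin)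
    have hsz : size t = size (canon (removeAt t q)) + 1 := by omega
    have hx := exchange hu1 h1 hsz
    have hn : 0 < ncoef (canon (removeAt t q)) t := by
      by_contra h
      have h0 : ncoef (canon (removeAt t q)) t = 0 := by omega
      have hpos := Nat.mul_pos hm (sgOrder_pos (canon (removeAt t q)))
      rw [hx, h0] at hpos
      simp at hpos
    have hne : (positions (canon (removeAt t q))).filter
        (fun p => canon (addLeafAt (canon (removeAt t q)) p) = t) ≠ [] := by
      intro hcon
      rw [ncoef, hcon] at hn
      simp at hn
    obtain ⟨p, hp⟩ := List.exists_mem_of_ne_nil _ hne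
    rw [List.mem_filter] at hp
    rw [treeList_succ_succ, List.mem_dedup, List.mem_flatMap]
    exact ⟨canon (removeAt t q), humem,
      List.mem_map.mpr ⟨p, hp.1, of_decide_eq_true hp.2⟩⟩

theorem sum_map_add' {α : Type*} (f g : α → ℚ) (l : List α) :
    (l.map (fun a => f a + g a)).sum = (l.map f).sum + (l.map g).sum := by
  induction l with
  | nil => simp
  | cons x l ih =>
    simp [ih]
    ring

theorem sum_ite_single (Ms : List PreTree) (hnd : Ms.Nodup) (b : PreTree) (hb : b ∈ Ms)
    (f : PreTree → ℚ) :
    (Ms.map (fun s => (if b = s then (1 : ℚ) else 0) * f s)).sum = f b := by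
  induction Ms with
  | nil => simp at hb
  | cons x Ms ih =>
    rw [List.map_cons, List.sum_cons]
    rcases List.mem_cons.mp hb with rfl | hb'
    · rw [if_pos rfl, one_mul]
      have hnotin : b ∉ Ms := (List.nodup_cons.mp hnd).1
      have hz : (Ms.map (fun s => (if b = s then (1 : ℚ) else 0) * f s)).sum = 0 := by
        apply List.sum_eq_zero
        intro y hy
        rw [List.mem_map] at hy
        obtain ⟨s, hs, rfl⟩ := hy
        rw [if_neg, zero_mul]
        rintro rfl
        exact hnotin hs
      rw [hz, add_zero]
    · have hx : x ≠ b := by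
        rintro rfl
        exact (List.nodup_cons.mp hnd).1 hb'
      rw [if_neg (fun h => hx h.symm), zero_mul, zero_add]
      exact ih (List.nodup_cons.mp hnd).2 hb'

theorem sum_fiber (L : List (List ℕ)) (g : List ℕ → PreTree) (Ms : List PreTree)
    (hnd : Ms.Nodup) (him : ∀ x ∈ L, g x ∈ Ms) (f : PreTree → ℚ) :
    (Ms.map (fun s => ((L.filter (fun x => g x = s)).length : ℚ) * f s)).sum
      = (L.map (fun x => f (g x))).sum := by
  induction L with
  | nil => simp
  | cons x L ihL =>
    have him' : ∀ y ∈ L, g y ∈ Ms := fun y hy => him y (List.mem_cons_of_mem x hy)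
    have hpt : ∀ s ∈ Ms, (((x :: L).filter (fun y => g y = s)).length : ℚ) * f s
        = (if g x = s then (1 : ℚ) else 0) * f s
          + ((L.filter (fun y => g y = s)).length : ℚ) * f s := by
      intro s _
      rw [List.filter_cons]
      by_cases h : g x = s
      · simp [h]
        ring
      · simp [h]
    rw [List.map_congr_left hpt, sum_map_add',
      sum_ite_single Ms hnd (g x) (him x List.mem_cons_self) f, ihL him',
      List.map_cons, List.sum_cons]

/-- Reindexing a sum over trees weighted by `mcoef` as a sum over terminal positions. -/
theorem sum_mcoef_f {n : ℕ} {t : PreTree} (ht : IsCanon t) (hsz : size t = n + 2)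
    (f : PreTree → ℚ) :
    ((treeList (n + 1)).map (fun s => (mcoef s t : ℚ) * f s)).sum
      = ((termPositions t).map (fun q => f (canon (removeAt t q)))).sum := by
  have him : ∀ q ∈ termPositions t, canon (removeAt t q) ∈ treeList (n + 1) := by
    intro q hq
    apply complete_treeList
    · exact isCanon_canon _
    · rw [size_canon]
      have := size_removeAt t q hq (by omega)
      omega
  exact sum_fiber (termPositions t) (fun q => canon (removeAt t q)) (treeList (n + 1))
    (nodup_treeList (n + 1)) him f

theorem cast_sum_map (F : PreTree → ℕ) (l : List PreTree) :
    (((l.map F).sum : ℕ) : ℚ) = (l.map (fun x => (F x : ℚ))).sum := by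
  induction l with
  | nil => simp
  | cons x l ih => simp [ih]

end TreeList
section Main

theorem mGen_zero (t t' : PreTree) : mGen 0 t t' = if t = t' then 1 else 0 := by rw [mGen]
theorem mGen_succ (k : ℕ) (t t' : PreTree) :
    mGen (k + 1) t t' = ((treeList (t'.size - 1)).map (fun s => mcoef s t' * mGen k t s)).sum := by
  rw [mGen]
theorem nGen_zero (t t' : PreTree) : nGen 0 t t' = if t = t' then 1 else 0 := by rw [nGen]
theorem nGen_succ (k : ℕ) (t t' : PreTree) :
    nGen (k + 1) t t' = ((treeList (t.size + k)).map (fun s => nGen k t s * ncoef s t')).sum := by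
  rw [nGen]

theorem mWt_leaf : mWt leaf = 1 := by
  rw [mWt, size_leaf]
  norm_num
  rw [mGen_zero, if_pos rfl]

theorem nWt_leaf : nWt leaf = 1 := by
  rw [nWt, size_leaf]
  norm_num
  rw [nGen_zero, if_pos rfl]

theorem mWt_eq {n : ℕ} {t : PreTree} (ht : t ∈ treeList (n + 2)) :
    mWt t = ((treeList (n + 1)).map (fun s => mcoef s t * mWt s)).sum := by
  obtain ⟨_, h2⟩ := mem_treeList _ t ht
  rw [mWt, h2, show n + 2 - 1 = n + 1 by omega, mGen_succ, h2,
    show n + 2 - 1 = n + 1 by omega]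
  apply congrArg List.sum
  apply List.map_congr_left
  intro s hs
  obtain ⟨_, hs2⟩ := mem_treeList _ s hs
  rw [mWt, hs2, show n + 1 - 1 = n by omega]

theorem nWt_eq {n : ℕ} {t : PreTree} (ht : t ∈ treeList (n + 2)) :
    nWt t = ((treeList (n + 1)).map (fun s => nWt s * ncoef s t)).sum := by
  obtain ⟨_, h2⟩ := mem_treeList _ t ht
  rw [nWt, h2, show n + 2 - 1 = n + 1 by omega, nGen_succ, size_leaf,
    show 1 + n = n + 1 by omega]
  apply congrArg List.sum
  apply List.map_congr_left
  intro s hs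
  obtain ⟨_, hs2⟩ := mem_treeList _ s hs
  rw [nWt, hs2, show n + 1 - 1 = n by omega]

theorem mWt_hProd : ∀ (n : ℕ) (t : PreTree), t ∈ treeList (n + 1) →
    (mWt t : ℚ) * (hProd t : ℚ) = ((n + 1 : ℕ) : ℚ) * (Nat.factorial n : ℚ) := by
  intro n
  induction n with
  | zero =>
    intro t ht
    rw [treeList_one] at ht
    simp at ht
    subst ht
    simp [mWt_leaf, Nat.factorial]
  | succ n ihn =>
    intro t ht
    obtain ⟨ht1, ht2⟩ := mem_treeList _ t ht
    have hH : (hProd t : ℚ) ≠ 0 := Nat.cast_ne_zero.mpr (hProd_pos t).ne'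
    rw [mWt_eq ht, cast_sum_map]
    have hpt : ∀ s ∈ treeList (n + 1), ((mcoef s t * mWt s : ℕ) : ℚ)
        = (mcoef s t : ℚ) *
          (((n + 1 : ℕ) : ℚ) * (Nat.factorial n : ℚ) / (hProd s : ℚ)) := by
      intro s hs
      have hHs : (hProd s : ℚ) ≠ 0 := Nat.cast_ne_zero.mpr (hProd_pos s).ne'
      have hw : (mWt s : ℚ) = ((n + 1 : ℕ) : ℚ) * (Nat.factorial n : ℚ) / (hProd s : ℚ) := by
        rw [eq_div_iff hHs]
        exact ihn s hs
      rw [Nat.cast_mul, hw]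
    rw [List.map_congr_left hpt, sum_mcoef_f ht1 ht2]
    have hpt2 : ∀ q ∈ termPositions t,
        ((n + 1 : ℕ) : ℚ) * (Nat.factorial n : ℚ) / (hProd (canon (removeAt t q)) : ℚ)
        = (((n + 1 : ℕ) : ℚ) * (Nat.factorial n : ℚ) / (hProd t : ℚ))
            * ((hProd t : ℚ) / (hProd (removeAt t q) : ℚ)) := by
      intro q _
      rw [hProd_canon, div_mul_div_comm,
        mul_comm (((n + 1 : ℕ) : ℚ) * (Nat.factorial n : ℚ)) (hProd t : ℚ),
        mul_div_mul_left _ _ hH]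
    rw [List.map_congr_left hpt2, List.sum_map_mul_left, hProd_ratio_sum, ht2]
    field_simp
    push_cast [Nat.factorial_succ]
    ring

theorem nWt_formula : ∀ (n : ℕ) (t : PreTree), t ∈ treeList (n + 1) →
    (nWt t : ℚ) * (sgOrder t : ℚ) * (hProd t : ℚ) = (Nat.factorial (n + 1) : ℚ) := by
  intro n
  induction n with
  | zero =>
    intro t ht
    rw [treeList_one] at ht
    simp at ht
    subst ht
    simp [nWt_leaf, Nat.factorial]
  | succ n ihn =>
    intro t ht
    obtain ⟨ht1, ht2⟩ := mem_treeList _ t ht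
    have hH : (hProd t : ℚ) ≠ 0 := Nat.cast_ne_zero.mpr (hProd_pos t).ne'
    have hσt : (sgOrder t : ℚ) ≠ 0 := Nat.cast_ne_zero.mpr (sgOrder_pos t).ne'
    rw [nWt_eq ht, cast_sum_map]
    have hpt : ∀ s ∈ treeList (n + 1), ((nWt s * ncoef s t : ℕ) : ℚ)
        = (mcoef s t : ℚ) *
          ((Nat.factorial (n + 1) : ℚ) / ((sgOrder t : ℚ) * (hProd s : ℚ))) := by
      intro s hs
      obtain ⟨hs1, hs2⟩ := mem_treeList _ s hs
      have hHs : (hProd s : ℚ) ≠ 0 := Nat.cast_ne_zero.mpr (hProd_pos s).ne'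
      have hσs : (sgOrder s : ℚ) ≠ 0 := Nat.cast_ne_zero.mpr (sgOrder_pos s).ne'
      have hw : (nWt s : ℚ) = (Nat.factorial (n + 1) : ℚ)
          / ((sgOrder s : ℚ) * (hProd s : ℚ)) := by
        rw [eq_div_iff (mul_ne_zero hσs hHs), ← mul_assoc]
        exact ihn s hs
      have hex := exchange hs1 ht1 (by omega)
      have hexQ : (mcoef s t : ℚ) * (sgOrder s : ℚ) = (ncoef s t : ℚ) * (sgOrder t : ℚ) := by
        exact_mod_cast hex
      have hx : (ncoef s t : ℚ) = (mcoef s t : ℚ) * (sgOrder s : ℚ) / (sgOrder t : ℚ) := by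
        rw [eq_div_iff hσt]
        exact hexQ.symm
      rw [Nat.cast_mul, hw, hx]
      field_simp
    rw [List.map_congr_left hpt, sum_mcoef_f ht1 ht2]
    have hpt2 : ∀ q ∈ termPositions t,
        (Nat.factorial (n + 1) : ℚ) / ((sgOrder t : ℚ) * (hProd (canon (removeAt t q)) : ℚ))
        = ((Nat.factorial (n + 1) : ℚ) / ((sgOrder t : ℚ) * (hProd t : ℚ)))
            * ((hProd t : ℚ) / (hProd (removeAt t q) : ℚ)) := by
      intro q _
      rw [hProd_canon]
      have h1 : (hProd (removeAt t q) : ℚ) ≠ 0 := Nat.cast_ne_zero.mpr (hProd_pos _).ne'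
      field_simp
    rw [List.map_congr_left hpt2, List.sum_map_mul_left, hProd_ratio_sum, ht2]
    field_simp
    push_cast [Nat.factorial_succ]
    ring

theorem prod_choose : ∀ m : ℕ, (∏ i ∈ Finset.Icc 2 (m + 1), ((Nat.choose i 2 : ℕ) : ℚ))
    = ((Nat.factorial (m + 1) : ℚ) * (Nat.factorial m : ℚ)) / 2 ^ m := by
  intro m
  induction m with
  | zero =>
    rw [show Finset.Icc 2 1 = ∅ from Finset.Icc_eq_empty (by omega)]
    simp [Nat.factorial]
  | succ m ih =>
    rw [Finset.prod_Icc_succ_top (by omega : 2 ≤ m + 1 + 1), ih]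
    have h2 : (Nat.choose (m + 2) 2) * 2 = (m + 2) * (m + 1) := by
      rw [Nat.choose_two_right, show m + 2 - 1 = m + 1 by omega]
      apply Nat.div_mul_cancel
      have := Nat.even_mul_succ_self (m + 1)
      rw [Nat.mul_comm] at this
      exact this.two_dvd
    have hch : ((Nat.choose (m + 1 + 1) 2 : ℕ) : ℚ)
        = ((m + 2 : ℕ) : ℚ) * ((m + 1 : ℕ) : ℚ) / 2 := by
      rw [eq_div_iff (by norm_num : (2 : ℚ) ≠ 0)]
      exact_mod_cast h2
    rw [hch]
    push_cast [Nat.factorial_succ]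
    field_simp
    ring

end Main

end PreTree


open PreTree in
/-- For every rooted unlabeled tree `t` on `n` vertices,
`π_n(t) = m(t) n(t) / ∏_{i=2}^n C(i,2) = n · 2^{n-1} / (|SG(t)| ∏_{v ∈ t} h(v)²)`,
where `h(v)` is the number of vertices of the subtree rooted at `v` and `SG(t)`
is the symmetry group of `t`. -/
theorem piM_eq_symmetry_formula (n : ℕ) (hn : 1 ≤ n) (t : PreTree) (ht : t ∈ trees n) :
    (mWt t * nWt t : ℚ) / ∏ i ∈ Finset.Icc 2 n, (Nat.choose i 2 : ℚ)
      = ((n : ℚ) * 2 ^ (n - 1)) / ((sgOrder t : ℚ) * (hProd t : ℚ) ^ 2) := by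
  obtain ⟨m, rfl⟩ : ∃ m, n = m + 1 := ⟨n - 1, by omega⟩
  rw [trees, List.mem_toFinset] at ht
  have hA := mWt_hProd m t ht
  have hB := nWt_formula m t ht
  have hH : (hProd t : ℚ) ≠ 0 := Nat.cast_ne_zero.mpr (hProd_pos t).ne'
  have hσ : (sgOrder t : ℚ) ≠ 0 := Nat.cast_ne_zero.mpr (sgOrder_pos t).ne'
  have hf1 : (Nat.factorial m : ℚ) ≠ 0 := Nat.cast_ne_zero.mpr (Nat.factorial_pos m).ne'
  have hf2 : (Nat.factorial (m + 1) : ℚ) ≠ 0 := Nat.cast_ne_zero.mpr (Nat.factorial_pos _).ne'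
  have hmW : (mWt t : ℚ) = ((m + 1 : ℕ) : ℚ) * (Nat.factorial m : ℚ) / (hProd t : ℚ) := by
    rw [eq_div_iff hH]
    exact hA
  have hnW : (nWt t : ℚ) = (Nat.factorial (m + 1) : ℚ) / ((sgOrder t : ℚ) * (hProd t : ℚ)) := by
    rw [eq_div_iff (mul_ne_zero hσ hH), ← mul_assoc]
    exact hB
  rw [hmW, hnW, prod_choose m, show (m + 1) - 1 = m by omega]
  have h2 : ((2 : ℚ)) ^ m ≠ 0 := pow_ne_zero m two_ne_zero
  field_simp

end RootedTreeChain
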